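/- For any k ∈ ℝ, y > 0, and d₂ ∈ ℝ, one has C_BS(k,y) ≥ Φ(d₂ + y) - e^k·Φ(d₂). -/

import Mathlib

open MeasureTheory Real Filter Asymptotics Set

/-- Standard normal density. -/
noncomputable def phi (z : ℝ) : ℝ := (Real.sqrt (2 * Real.pi))⁻¹ * Real.exp (-z ^ 2 / 2)

/-- Standard normal CDF. -/
noncomputable def Phi (x : ℝ) : ℝ := ∫ z in Set.Iic x, phi z

/-- Black–Scholes normalized call price. -/
noncomputable def CBS (k y : ℝ) : ℝ :=
  if 0 < y then Phi (-k / y + y / 2) - Real.exp k * Phi (-k / y - y / 2)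
  else max (1 - Real.exp k) 0

/-- Implied total standard deviation: inverse of `CBS k` on `[0,∞)`. -/
noncomputable def YBS (k c : ℝ) : ℝ := sInf {y : ℝ | 0 ≤ y ∧ CBS k y = c}

/-- Inverse of the standard normal CDF on (0,1). -/
noncomputable def PhiInv (u : ℝ) : ℝ := sInf {x : ℝ | u ≤ Phi x}

/-- Extended-real quantile with the convention `Φ⁻¹(u) = +∞` for `u ≥ 1`, `-∞` for `u ≤ 0`. -/
noncomputable def PhiInvE (u : ℝ) : EReal :=
  if 1 ≤ u then ⊤ else if u ≤ 0 then ⊥ else ((PhiInv u : ℝ) : EReal)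

lemma phi_cont : Continuous phi := by unfold phi; continuity

lemma phi_pos (z : ℝ) : 0 < phi z := by
  unfold phi
  have := Real.pi_pos
  positivity

lemma integrable_phi : Integrable phi := by
  have h := (integrable_exp_neg_mul_sq (b := 2⁻¹) (by norm_num)).const_mul
    ((Real.sqrt (2 * Real.pi))⁻¹)
  convert h using 2 with z
  unfold phi
  ring_nf

lemma hasDerivAt_Phi (x : ℝ) : HasDerivAt Phi (phi x) x := by
  have key : ∀ u : ℝ, Phi u = Phi 0 + ∫ z in (0:ℝ)..u, phi z := by
    intro u
    unfold Phi
    rw [← intervalIntegral.integral_Iic_sub_Iic integrable_phi.integrableOn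
      integrable_phi.integrableOn]
    ring
  have h : HasDerivAt (fun u => Phi 0 + ∫ z in (0:ℝ)..u, phi z) (phi x) x := by
    refine HasDerivAt.const_add _ (intervalIntegral.integral_hasDerivAt_right
      (integrable_phi.intervalIntegrable)
      (phi_cont.aestronglyMeasurable.stronglyMeasurableAtFilter)
      phi_cont.continuousAt)
  exact h.congr_of_eventuallyEq (Filter.Eventually.of_forall key)

lemma Phi_cont : Continuous Phi :=
  continuous_iff_continuousAt.2 fun x => (hasDerivAt_Phi x).continuousAt

lemma phi_shift (d y : ℝ) : phi (d + y) = phi d * Real.exp (-(d*y) - y^2/2) := by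
  unfold phi
  rw [mul_assoc, ← Real.exp_add]
  ring_nf

theorem stmt_10 (k y d₂ : ℝ) (hy : 0 < y) :
    CBS k y ≥ Phi (d₂ + y) - Real.exp k * Phi d₂ := by
  set F : ℝ → ℝ := fun d => Phi (d + y) - Real.exp k * Phi d with hF
  have hder : ∀ d : ℝ, HasDerivAt F (phi (d + y) - Real.exp k * phi d) d := fun d =>
    ((hasDerivAt_Phi (d + y)).comp d (h := fun x => id x + y) ((hasDerivAt_id d).add_const y)).sub
      ((hasDerivAt_Phi d).const_mul (Real.exp k)) |>.congr_deriv
        (by ring : phi (d + y) * 1 - Real.exp k * phi d = phi (d + y) - Real.exp k * phi d)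
  set ds : ℝ := -k / y - y / 2 with hds
  have hCBS : CBS k y = F ds := by
    simp only [CBS, if_pos hy, hF, hds]
    have h2 : -k / y + y / 2 = (-k / y - y / 2) + y := by ring
    rw [h2]
  rw [ge_iff_le, hCBS]
  have hFcont : Continuous F := (Phi_cont.comp (by continuity)).sub (continuous_const.mul Phi_cont)
  have hdsy : ds * y = -k - y ^ 2 / 2 := by rw [hds, sub_mul, div_mul_cancel₀ _ hy.ne']; ring
  show F d₂ ≤ F ds
  rcases le_total d₂ ds with hcase | hcase
  · have hmono : MonotoneOn F (Icc d₂ ds) := by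
      refine monotoneOn_of_deriv_nonneg (convex_Icc _ _) hFcont.continuousOn
        (fun d _ => ((hder d).differentiableAt).differentiableWithinAt) ?_
      intro d hd
      rw [interior_Icc] at hd
      rw [(hder d).deriv, phi_shift, sub_nonneg]
      have hdle : d * y ≤ ds * y := mul_le_mul_of_nonneg_right hd.2.le hy.le
      calc Real.exp k * phi d ≤ Real.exp (-(d*y) - y^2/2) * phi d := by
            apply mul_le_mul_of_nonneg_right _ (phi_pos d).le
            exact Real.exp_le_exp.2 (by rw [hdsy] at hdle; linarith)
        _ = phi d * Real.exp (-(d*y) - y^2/2) := mul_comm _ _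
    exact hmono ⟨le_rfl, hcase⟩ ⟨hcase, le_rfl⟩ hcase
  · have hanti : AntitoneOn F (Icc ds d₂) := by
      refine antitoneOn_of_deriv_nonpos (convex_Icc _ _) hFcont.continuousOn
        (fun d _ => ((hder d).differentiableAt).differentiableWithinAt) ?_
      intro d hd
      rw [interior_Icc] at hd
      rw [(hder d).deriv, phi_shift, sub_nonpos]
      have hdle : ds * y ≤ d * y := mul_le_mul_of_nonneg_right hd.1.le hy.le
      calc phi d * Real.exp (-(d*y) - y^2/2) = Real.exp (-(d*y) - y^2/2) * phi d :=
            mul_comm _ _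
        _ ≤ Real.exp k * phi d := by
            apply mul_le_mul_of_nonneg_right _ (phi_pos d).le
            exact Real.exp_le_exp.2 (by rw [hdsy] at hdle; linarith)
    exact hanti ⟨le_rfl, hcase⟩ ⟨hcase, le_rfl⟩ hcase
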